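/- Let n, f be natural numbers with n > 5f, let P be a multiset of n real numbers, and let U be a submultiset of P of cardinality m with m ≥ n − f. Then for every element p of U, the destination dest(P,p) = (min(p, P_{2f+1}) + max(p, P_{n−2f}))/2 computed by the convergence algorithm lies in the interval [min U, max U]. (Cautiousness of Algorithm 1: correct robots always compute destinations within the range of positions held by correct robots, regardless of the positions of the Byzantine robots.) -/
import Mathlib


/-- `kth P k` is the `k`-th smallest element (1-based, counted with multiplicity)
of the multiset `P` of reals. -/
noncomputable def kth (P : Multiset ℝ) (k : ℕ) : ℝ :=
  (P.sort (· ≤ ·)).getD (k - 1) 0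

/-- The minimum of a (nonempty) multiset of reals: its 1st smallest element. -/
noncomputable def mmin (U : Multiset ℝ) : ℝ := kth U 1

/-- The maximum of a (nonempty) multiset of reals: its `card`-th smallest element. -/
noncomputable def mmax (U : Multiset ℝ) : ℝ := kth U (Multiset.card U)

/-- The destination computed by Algorithm 1 by a robot at position `p` observing
the configuration `P` of `n` robots (at most `f` Byzantine): the midpoint of the
trimmed range `[min(p, P_{2f+1}), max(p, P_{n-2f})]`. -/
noncomputable def dest (n f : ℕ) (P : Multiset ℝ) (p : ℝ) : ℝ :=
  (min p (kth P (2 * f + 1)) + max p (kth P (n - 2 * f))) / 2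

lemma sorted_mono {L : List ℝ} (hs : L.Pairwise (· ≤ ·)) {i j : ℕ} (hij : i ≤ j)
    (hj : j < L.length) : L[i]'(lt_of_le_of_lt hij hj) ≤ L[j] := by
  rcases eq_or_lt_of_le hij with rfl | h
  · exact le_rfl
  · exact (List.pairwise_iff_getElem.mp hs) i j _ hj h

lemma countP_sort (P : Multiset ℝ) (q : ℝ → Bool) :
    (P.sort (· ≤ ·)).countP q = Multiset.countP (fun a => q a) P := by
  conv_rhs => rw [← P.sort_eq (· ≤ ·)]
  rw [Multiset.coe_countP]
  congr 1
  funext b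
  simp

lemma kth_ge (P : Multiset ℝ) (k : ℕ) (x : ℝ) (hk : 1 ≤ k) (hkc : k ≤ Multiset.card P)
    (hcount : Multiset.countP (fun a => decide (a < x)) P < k) :
    x ≤ kth P k := by
  show x ≤ (P.sort (· ≤ ·)).getD (k - 1) 0
  set L := P.sort (· ≤ ·) with hL
  have hlen : L.length = Multiset.card P := P.length_sort _
  have hs : L.Pairwise (· ≤ ·) := P.pairwise_sort _
  have hkl : k - 1 < L.length := by omega
  rw [List.getD_eq_getElem L 0 hkl]
  by_contra h
  push_neg at h
  have hall : ∀ a ∈ L.take k, a < x := by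
    intro a ha
    rw [List.mem_iff_getElem] at ha
    obtain ⟨i, hi, rfl⟩ := ha
    have hik : i < k := by simpa using hi.trans_le (List.length_take_le _ _)
    have hi' : i < L.length := by
      have := hi.trans_le (List.length_take_le k L); omega
    rw [List.getElem_take]
    exact lt_of_le_of_lt (sorted_mono hs (by omega) hkl) h
  have hcnt : (L.take k).countP (fun a => decide (a < x)) = k := by
    rw [List.countP_eq_length.mpr (by intro a ha; simpa using hall a ha)]
    simp [List.length_take]; omega
  have hge : k ≤ L.countP (fun a => decide (a < x)) := by
    conv_rhs => rw [← List.take_append_drop k L]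
    rw [List.countP_append, hcnt]
    omega
  have heq := countP_sort P (fun a => decide (a < x))
  rw [← hL] at heq
  simp only [decide_eq_true_eq] at heq hcount
  omega

lemma kth_le (P : Multiset ℝ) (k : ℕ) (x : ℝ) (hk : 1 ≤ k) (hkc : k ≤ Multiset.card P)
    (hcount : Multiset.countP (fun a => decide (x < a)) P ≤ Multiset.card P - k) :
    kth P k ≤ x := by
  show (P.sort (· ≤ ·)).getD (k - 1) 0 ≤ x
  set L := P.sort (· ≤ ·) with hL
  have hlen : L.length = Multiset.card P := P.length_sort _
  have hs : L.Pairwise (· ≤ ·) := P.pairwise_sort _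
  have hkl : k - 1 < L.length := by omega
  rw [List.getD_eq_getElem L 0 hkl]
  by_contra h
  push_neg at h
  have hall : ∀ a ∈ L.drop (k-1), x < a := by
    intro a ha
    rw [List.mem_iff_getElem] at ha
    obtain ⟨i, hi, rfl⟩ := ha
    have hi' : k - 1 + i < L.length := by
      rw [List.length_drop] at hi; omega
    rw [List.getElem_drop]
    exact lt_of_lt_of_le h (sorted_mono hs (by omega) hi')
  have hcnt : (L.drop (k-1)).countP (fun a => decide (x < a)) = L.length - (k-1) := by
    rw [List.countP_eq_length.mpr (by intro a ha; simpa using hall a ha)]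
    simp [List.length_drop]
  have hge : L.length - (k-1) ≤ L.countP (fun a => decide (x < a)) := by
    conv_rhs => rw [← List.take_append_drop (k-1) L]
    rw [List.countP_append, hcnt]
    omega
  have heq := countP_sort P (fun a => decide (x < a))
  rw [← hL] at heq
  simp only [decide_eq_true_eq] at heq hcount
  omega

lemma mmin_le_mem (U : Multiset ℝ) (a : ℝ) (ha : a ∈ U) :
    mmin U ≤ a := by
  show (U.sort (· ≤ ·)).getD 0 0 ≤ a
  set L := U.sort (· ≤ ·) with hL
  have hs : L.Pairwise (· ≤ ·) := U.pairwise_sort _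
  have haL : a ∈ L := by rw [hL, Multiset.mem_sort]; exact ha
  rw [List.mem_iff_getElem] at haL
  obtain ⟨i, hi, rfl⟩ := haL
  rw [List.getD_eq_getElem L 0 (by omega)]
  exact sorted_mono hs (Nat.zero_le i) hi

lemma mem_le_mmax (U : Multiset ℝ) (a : ℝ) (ha : a ∈ U) :
    a ≤ mmax U := by
  show a ≤ (U.sort (· ≤ ·)).getD (Multiset.card U - 1) 0
  set L := U.sort (· ≤ ·) with hL
  have hlen : L.length = Multiset.card U := U.length_sort _
  have hs : L.Pairwise (· ≤ ·) := U.pairwise_sort _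
  have haL : a ∈ L := by rw [hL, Multiset.mem_sort]; exact ha
  rw [List.mem_iff_getElem] at haL
  obtain ⟨i, hi, rfl⟩ := haL
  rw [List.getD_eq_getElem L 0 (by omega)]
  exact sorted_mono hs (by omega) (by omega)

theorem stmt_3 (n f : ℕ) (hnf : n > 5 * f) (P U : Multiset ℝ)
    (hP : Multiset.card P = n) (hUP : U ≤ P) (m : ℕ) (hm : Multiset.card U = m)
    (hmf : m ≥ n - f) :
    ∀ p ∈ U, dest n f P p ∈ Set.Icc (mmin U) (mmax U) := by
  intro p hp
  obtain ⟨V, rfl⟩ := Multiset.le_iff_exists_add.mp hUP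
  have hcard : n = m + Multiset.card V := by
    rw [← hP, Multiset.card_add, hm]
  have hminp : mmin U ≤ p := mmin_le_mem U p hp
  have hpmax : p ≤ mmax U := mem_le_mmax U p hp
  have hcountlo : Multiset.countP (fun a => decide (a < mmin U)) (U + V) ≤ f := by
    rw [Multiset.countP_add]
    have h1 : Multiset.countP (fun a => decide (a < mmin U)) U = 0 := by
      rw [Multiset.countP_eq_zero]
      intro a ha
      simpa using not_lt.mpr (mmin_le_mem U a ha)
    have h2 := Multiset.countP_le_card (fun a => decide (a < mmin U)) V
    omega
  have hcounthi : Multiset.countP (fun a => decide (mmax U < a)) (U + V) ≤ f := by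
    rw [Multiset.countP_add]
    have h1 : Multiset.countP (fun a => decide (mmax U < a)) U = 0 := by
      rw [Multiset.countP_eq_zero]
      intro a ha
      simpa using not_lt.mpr (mem_le_mmax U a ha)
    have h2 := Multiset.countP_le_card (fun a => decide (mmax U < a)) V
    omega
  have hlo : mmin U ≤ kth (U + V) (2 * f + 1) :=
    kth_ge (U + V) (2 * f + 1) (mmin U) (by omega) (by omega) (by omega)
  have hhi : kth (U + V) (n - 2 * f) ≤ mmax U :=
    kth_le (U + V) (n - 2 * f) (mmax U) (by omega) (by omega) (by rw [hP]; omega)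
  constructor
  · have h1 : mmin U ≤ min p (kth (U + V) (2 * f + 1)) := le_min hminp hlo
    have h2 : mmin U ≤ max p (kth (U + V) (n - 2 * f)) := le_trans hminp (le_max_left _ _)
    unfold dest; linarith
  · have h1 : min p (kth (U + V) (2 * f + 1)) ≤ mmax U :=
      le_trans (min_le_left _ _) hpmax
    have h2 : max p (kth (U + V) (n - 2 * f)) ≤ mmax U := max_le hpmax hhi
    unfold dest; linarith
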